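/- For any fractal necklace F, any two points x, u ∈ F, and any integer k ≥ 1, there exists a k-level chain of F from x to u: a finite sequence (A_1,…,A_N) of k-level copies of F with x ∈ A_1 \ ⋃_{j≥2} A_j, u ∈ A_N \ ⋃_{j≤N−1} A_j, A_j ∩ A_m a singleton if |j−m| = 1 and empty if |j−m| ≥ 2. -/

import Mathlib

open Set Topology Metric Bornology

noncomputable section

/-- Euclidean space `ℝ^d`. -/
abbrev Euc (d : ℕ) := EuclideanSpace ℝ (Fin d)

/-- A fractal necklace in `ℝ^d`: the attractor `F` of a necklace IFS `f_1, …, f_n`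
(`n ≥ 3`) of contractive homeomorphisms of `ℝ^d`, where cyclically adjacent 1-level
copies meet in a single point (a main node `z k`) and non-adjacent copies are disjoint. -/
structure Necklace (d : ℕ) where
  n : ℕ
  hn : 3 ≤ n
  f : Fin n → (Euc d ≃ₜ Euc d)
  contr : ∀ k, ∃ c : NNReal, c < 1 ∧ LipschitzWith c (f k)
  F : Set (Euc d)
  Fne : F.Nonempty
  Fcpt : IsCompact F
  Fattr : F = ⋃ k, (f k) '' F
  z : Fin n → Euc d
  hz : ∀ k : Fin n, (f k) '' F ∩ (f (k + ⟨1, by omega⟩)) '' F = {z k}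
  hdisj : ∀ m k : Fin n, m ≠ k → m ≠ k + ⟨1, by omega⟩ → k ≠ m + ⟨1, by omega⟩ →
    (f m) '' F ∩ (f k) '' F = ∅

namespace Necklace

variable {d : ℕ}

/-- The digit `1` of `Fin n`. -/
def one (N : Necklace d) : Fin N.n := ⟨1, by have := N.hn; omega⟩

/-- The homeomorphism `f_σ = f_{i₁} ∘ ⋯ ∘ f_{i_m}` associated to a word `σ = i₁⋯i_m`. -/
def word (N : Necklace d) : List (Fin N.n) → (Euc d ≃ₜ Euc d)
  | [] => Homeomorph.refl _
  | i :: s => (N.word s).trans (N.f i)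

/-- The copy `F_σ = f_σ(F)` of the necklace. -/
def copy (N : Necklace d) (σ : List (Fin N.n)) : Set (Euc d) := N.word σ '' N.F

/-- `c_m(x)`: the number of words `σ` of length `m` with `x ∈ F_σ`. -/
def cnt (N : Necklace d) (m : ℕ) (x : Euc d) : ℕ :=
  Set.ncard {σ : List (Fin N.n) | σ.length = m ∧ x ∈ N.copy σ}

/-- The boundary `∂_F F_k = {z_{k-1}, z_k}` of the 1-level copy `F_k` in `F`. -/
def bdry (N : Necklace d) (k : Fin N.n) : Set (Euc d) := {N.z (k - N.one), N.z k}

/-- A necklace is stable if for each `k` at least two second-level copies `F_{kj}`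
meet `∂_F F_k`. -/
def Stable (N : Necklace d) : Prop :=
  ∀ k : Fin N.n,
    2 ≤ Set.ncard {A : Set (Euc d) |
      (∃ j : Fin N.n, A = N.f k '' (N.f j '' N.F)) ∧ (A ∩ N.bdry k).Nonempty}

/-- A necklace is good if `∂_F F_k` is not contained in any second-level copy `F_{kj}`. -/
def Good (N : Necklace d) : Prop :=
  ∀ k j : Fin N.n, ¬ (N.bdry k ⊆ N.f k '' (N.f j '' N.F))

/-- A necklace is of bounded ramification if `{c_m(z_k)}_m` is bounded for each `k`. -/
def BoundedRamification (N : Necklace d) : Prop :=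
  ∀ k : Fin N.n, ∃ C : ℕ, ∀ m : ℕ, N.cnt m (N.z k) ≤ C

/-- `M_F`: the set of points that are main nodes of some copy of `F`. -/
def MF (N : Necklace d) : Set (Euc d) :=
  {x | ∃ (σ : List (Fin N.n)) (k : Fin N.n), x = N.word σ (N.z k)}

/-- A necklace has no cut points if `F \ {x}` is connected for every `x ∈ F`. -/
def NoCutPoints (N : Necklace d) : Prop :=
  ∀ x ∈ N.F, IsConnected (N.F \ {x})

/-- Property I: each 1-level copy `F_k` has an arc from `z_{k-1}` to `z_k` passing
through at least two main nodes of `F_k`. -/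
def PropertyI (N : Necklace d) : Prop :=
  ∀ k : Fin N.n, ∃ γ : Path (N.z (k - N.one)) (N.z k),
    Function.Injective γ ∧ (∀ t, γ t ∈ N.f k '' N.F) ∧
    ∃ p q : Euc d, p ≠ q ∧ (∃ j, p = N.f k (N.z j)) ∧ (∃ j, q = N.f k (N.z j)) ∧
      p ∈ Set.range γ ∧ q ∈ Set.range γ

/-- A necklace is self-similar if the maps of its NIFS are (contractive) similitudes. -/
def SelfSimilar (N : Necklace d) : Prop :=
  ∀ k : Fin N.n, ∃ c : ℝ, 0 < c ∧ c < 1 ∧ ∀ x y, dist (N.f k x) (N.f k y) = c * dist x y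

/-- The open set condition for the NIFS of a necklace. -/
def OSC (N : Necklace d) : Prop :=
  ∃ V : Set (Euc d), V.Nonempty ∧ IsOpen V ∧ IsBounded V ∧
    (∀ k, N.f k '' V ⊆ V) ∧ ∀ j k : Fin N.n, j ≠ k → N.f j '' V ∩ N.f k '' V = ∅

end Necklace

namespace Necklace

variable {d : ℕ}

open Fin.NatCast Fin.CommRing

instance (N : Necklace d) : NeZero N.n := ⟨by have := N.hn; omega⟩

/-- The 1-level copy `F_i`. -/
def piece (N : Necklace d) (i : Fin N.n) : Set (Euc d) := N.f i '' N.F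

lemma one_eq_mk (N : Necklace d) (h : 1 < N.n) : (⟨1, h⟩ : Fin N.n) = 1 := by
  have := N.hn
  apply Fin.ext
  simp [Fin.val_one', Nat.mod_eq_of_lt h]

lemma hz1 (N : Necklace d) (k : Fin N.n) :
    N.piece k ∩ N.piece (k + 1) = {N.z k} := by
  have h := N.hz k
  rwa [N.one_eq_mk] at h

lemma hdisj1 (N : Necklace d) (m k : Fin N.n) (h1 : m ≠ k) (h2 : m ≠ k + 1)
    (h3 : k ≠ m + 1) : N.piece m ∩ N.piece k = ∅ := by
  have h := N.hdisj m k h1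
  rw [N.one_eq_mk] at h
  exact h h2 h3

lemma piece_subset (N : Necklace d) (i : Fin N.n) : N.piece i ⊆ N.F := by
  conv_rhs => rw [N.Fattr]
  exact Set.subset_iUnion (fun k => N.f k '' N.F) i

lemma mem_piece_of_mem (N : Necklace d) {a : Euc d} (ha : a ∈ N.F) :
    ∃ i, a ∈ N.piece i := by
  rw [N.Fattr] at ha
  simpa [piece] using ha

lemma word_cons_apply (N : Necklace d) (i : Fin N.n) (σ : List (Fin N.n)) (x : Euc d) :
    N.word (i :: σ) x = N.f i (N.word σ x) := rfl

lemma word_append (N : Necklace d) (σ : List (Fin N.n)) (i : Fin N.n) (x : Euc d) :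
    N.word (σ ++ [i]) x = N.word σ (N.f i x) := by
  induction σ with
  | nil => rfl
  | cons j s ih => simp only [List.cons_append, word_cons_apply, ih]

lemma copy_nil (N : Necklace d) : N.copy [] = N.F := by
  simp [copy, word]

lemma copy_append (N : Necklace d) (σ : List (Fin N.n)) (i : Fin N.n) :
    N.copy (σ ++ [i]) = N.word σ '' (N.f i '' N.F) := by
  unfold copy
  rw [← Set.image_comp]
  exact Set.image_congr fun x _ => N.word_append σ i x

lemma copy_single (N : Necklace d) (i : Fin N.n) : N.copy [i] = N.piece i := by
  have h := N.copy_append [] i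
  rfl

/-- adjacency of two pieces sharing a point -/
lemma pair_adj (N : Necklace d) {a : Euc d} {i j : Fin N.n} (hi : a ∈ N.piece i)
    (hj : a ∈ N.piece j) (hij : i ≠ j) : j = i + 1 ∨ i = j + 1 := by
  by_contra h
  push_neg at h
  have he := N.hdisj1 i j hij h.2 h.1
  exact absurd (he ▸ Set.mem_inter hi hj) (Set.notMem_empty a)

/- cast toolbox -/
lemma cast_inj' (N : Necklace d) {p q : ℕ} (hp : p < N.n) (hq : q < N.n) :
    (p : Fin N.n) = (q : Fin N.n) ↔ p = q := by
  constructor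
  · intro h
    have := congrArg Fin.val h
    rwa [Fin.val_cast_of_lt hp, Fin.val_cast_of_lt hq] at this
  · rintro rfl; rfl

lemma shift_inj (N : Necklace d) (s : Fin N.n) {p q : ℕ} (hp : p < N.n) (hq : q < N.n) :
    s + (p : Fin N.n) = s + (q : Fin N.n) ↔ p = q := by
  rw [add_right_inj, N.cast_inj' hp hq]

lemma succ_cast (N : Necklace d) (s : Fin N.n) (t : ℕ) :
    s + ((t+1 : ℕ) : Fin N.n) = (s + (t : Fin N.n)) + 1 := by
  push_cast
  ring

lemma wrap_cast (N : Necklace d) (s : Fin N.n) :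
    (s + ((N.n - 1 : ℕ) : Fin N.n)) + 1 = s := by
  have := N.hn
  rw [← N.succ_cast s (N.n - 1)]
  have h1 : N.n - 1 + 1 = N.n := by omega
  rw [h1, Fin.natCast_self, add_zero]

/-- ℕ-indexed chain predicate: `B 0, …, B L` is a chain of `k`-level copies from `x`
to `u`. -/
def IsChainN (N : Necklace d) (k : ℕ) (x u : Euc d) (L : ℕ) (B : ℕ → Set (Euc d)) : Prop :=
  (∀ t ≤ L, ∃ σ : List (Fin N.n), σ.length = k ∧ B t = N.copy σ) ∧
  x ∈ B 0 ∧ (∀ t, 1 ≤ t → t ≤ L → x ∉ B t) ∧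
  u ∈ B L ∧ (∀ t < L, u ∉ B t) ∧
  (∀ t, t + 1 ≤ L → ∃ w, B t ∩ B (t+1) = {w}) ∧
  (∀ t t', t + 2 ≤ t' → t' ≤ L → B t ∩ B t' = ∅)

/-- Choice of a "clockwise end" `s` of the set of pieces containing `a`: all the pieces
`s + 1, …, s + (n-2)` avoid `a`. -/
lemma clockEnd (N : Necklace d) {a : Euc d} {ia i0 : Fin N.n} (hia : a ∈ N.piece ia)
    (h0 : a ∉ N.piece i0) :
    ∃ s, a ∈ N.piece s ∧
      ∀ t : ℕ, 1 ≤ t → t ≤ N.n - 2 → a ∉ N.piece (s + (t : Fin N.n)) := by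
  have hn := N.hn
  by_cases c1 : a ∈ N.piece (ia + 1)
  · refine ⟨ia + 1, c1, ?_⟩
    intro t ht1 ht2 hmem
    have hj : ia + 1 + (t : Fin N.n) = ia + ((t + 1 : ℕ) : Fin N.n) := by
      rw [N.succ_cast]; ring
    rw [hj] at hmem
    have hne : ia + ((t + 1 : ℕ) : Fin N.n) ≠ ia := by
      intro h
      have h' : ia + ((t + 1 : ℕ) : Fin N.n) = ia + ((0 : ℕ) : Fin N.n) := by
        rw [Nat.cast_zero, add_zero]; exact h
      have := (N.shift_inj ia (by omega) (by omega)).mp h'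
      omega
    rcases N.pair_adj hmem hia hne with h | h
    · -- h : ia = (ia + ↑(t+1)) + 1
      rw [← N.succ_cast ia (t + 1)] at h
      have h' : ia + ((0 : ℕ) : Fin N.n) = ia + ((t + 1 + 1 : ℕ) : Fin N.n) := by
        rw [Nat.cast_zero, add_zero]; exact h
      by_cases hlt : t + 2 < N.n
      · have := (N.shift_inj ia (by omega) (by omega)).mp h'
        omega
      · have htn : t + 2 = N.n := by omega
        have hne2 : ia + ((t + 1 : ℕ) : Fin N.n) ≠ ia + 1 := by
          intro h2
          have h2' : ia + ((t + 1 : ℕ) : Fin N.n) = ia + ((1 : ℕ) : Fin N.n) := by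
            rw [Nat.cast_one]; exact h2
          have := (N.shift_inj ia (by omega) (by omega)).mp h2'
          omega
        rcases N.pair_adj hmem c1 hne2 with h2 | h2
        · -- h2 : ia + 1 = (ia + ↑(t+1)) + 1 : cancel, contradict hne
          have h3 := add_right_cancel h2
          exact hne h3.symm
        · -- h2 : ia + ↑(t+1) = (ia + 1) + 1, so t + 1 = 2, t = 1, n = 3
          have h2' : ia + ((t + 1 : ℕ) : Fin N.n) = ia + ((1 + 1 : ℕ) : Fin N.n) := by
            rw [h2, N.succ_cast ia 1, Nat.cast_one]
          have ht12 : t + 1 = 1 + 1 := (N.shift_inj ia (by omega) (by omega)).mp h2'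
          have hn3 : N.n = 3 := by omega
          have hi0 : i0 = ia + (((i0 - ia).val : ℕ) : Fin N.n) := by
            rw [Fin.cast_val_eq_self]; ring
          have hv3 : (i0 - ia).val < 3 := by have := (i0 - ia).isLt; omega
          interval_cases hv : (i0 - ia).val
          · refine h0 ?_
            rw [hi0, Nat.cast_zero, add_zero]
            exact hia
          · refine h0 ?_
            rw [hi0, Nat.cast_one]
            exact c1
          · refine h0 ?_
            rw [hi0]
            have he : ((2 : ℕ) : Fin N.n) = ((t + 1 : ℕ) : Fin N.n) := by
              rw [ht12]
            rw [he]
            exact hmem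
    · -- h : ia + ↑(t+1) = ia + 1
      have h' : ia + ((t + 1 : ℕ) : Fin N.n) = ia + ((1 : ℕ) : Fin N.n) := by
        rw [Nat.cast_one]; exact h
      have := (N.shift_inj ia (by omega) (by omega)).mp h'
      omega
  · refine ⟨ia, hia, ?_⟩
    intro t ht1 ht2 hmem
    have hne : ia + ((t : ℕ) : Fin N.n) ≠ ia := by
      intro h
      have h' : ia + ((t : ℕ) : Fin N.n) = ia + ((0 : ℕ) : Fin N.n) := by
        rw [Nat.cast_zero, add_zero]; exact h
      have := (N.shift_inj ia (by omega) (by omega)).mp h'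
      omega
    rcases N.pair_adj hmem hia hne with h | h
    · -- h : ia = (ia + ↑t) + 1, so t + 1 ≡ 0 with t + 1 < n : impossible
      rw [← N.succ_cast ia t] at h
      have h' : ia + ((0 : ℕ) : Fin N.n) = ia + ((t + 1 : ℕ) : Fin N.n) := by
        rw [Nat.cast_zero, add_zero]; exact h
      have := (N.shift_inj ia (by omega) (by omega)).mp h'
      omega
    · -- h : ia + ↑t = ia + 1 : then a ∈ piece (ia + 1), contradiction
      exact c1 (h ▸ hmem)

/-- Base case: a 1-level chain between any two points of `F`. -/
lemma base (N : Necklace d) {a b : Euc d} (ha : a ∈ N.F) (hb : b ∈ N.F) :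
    ∃ L B, IsChainN N 1 a b L B ∧ ∀ t ≤ L, B t ⊆ N.F := by
  classical
  have hn := N.hn
  by_cases hcom : ∃ i, a ∈ N.piece i ∧ b ∈ N.piece i
  · obtain ⟨i, hai, hbi⟩ := hcom
    refine ⟨0, fun _ => N.piece i, ⟨?_, hai, ?_, hbi, ?_, ?_, ?_⟩, ?_⟩
    · intro t _; exact ⟨[i], by simp, (N.copy_single i).symm⟩
    · intro t h1 h2; omega
    · intro t ht; omega
    · intro t ht; omega
    · intro t t' h1 h2; omega
    · intro t _; exact N.piece_subset i
  · push_neg at hcom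
    obtain ⟨ia, hia⟩ := N.mem_piece_of_mem ha
    obtain ⟨ib, hib⟩ := N.mem_piece_of_mem hb
    obtain ⟨s, has, hsafe⟩ := N.clockEnd hia (fun h => hcom ib h hib)
    have hbs : b ∉ N.piece s := hcom s has
    have hw2 : b ∈ N.piece (s + (((ib - s).val : ℕ) : Fin N.n)) := by
      have : s + (((ib - s).val : ℕ) : Fin N.n) = ib := by
        rw [Fin.cast_val_eq_self]; ring
      rw [this]; exact hib
    have hw1 : 1 ≤ (ib - s).val := by
      have hjs : ib ≠ s := fun h => hbs (h ▸ hib)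
      have hne0 : ib - s ≠ 0 := sub_ne_zero.mpr hjs
      have : (ib - s).val ≠ 0 := fun h => hne0 (Fin.ext (by simp [h]))
      omega
    have hPex : ∃ t : ℕ, 1 ≤ t ∧ b ∈ N.piece (s + (t : Fin N.n)) := ⟨(ib - s).val, hw1, hw2⟩
    set t0 := Nat.find hPex with ht0def
    have ht0 := Nat.find_spec hPex
    have ht0min : ∀ t < t0, ¬(1 ≤ t ∧ b ∈ N.piece (s + (t : Fin N.n))) :=
      fun t ht => Nat.find_min hPex ht
    have ht0le : t0 ≤ N.n - 1 := by
      have h1 : t0 ≤ (ib - s).val := Nat.find_le ⟨hw1, hw2⟩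
      have h2 := (ib - s).isLt
      omega
    by_cases hcase : t0 ≤ N.n - 2
    · refine ⟨t0, fun t => N.piece (s + (t : Fin N.n)), ⟨?_, ?_, ?_, ?_, ?_, ?_, ?_⟩, ?_⟩
      · intro t _; exact ⟨[s + (t : Fin N.n)], by simp, (N.copy_single _).symm⟩
      · simpa using has
      · intro t h1 h2; exact hsafe t h1 (by omega)
      · exact ht0.2
      · intro t htlt hmem
        rcases Nat.eq_zero_or_pos t with rfl | hpos
        · exact hbs (by simpa using hmem)
        · exact ht0min t htlt ⟨hpos, hmem⟩
      · intro t htle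
        refine ⟨N.z (s + (t : Fin N.n)), ?_⟩
        show N.piece (s + (t : Fin N.n)) ∩ N.piece (s + ((t + 1 : ℕ) : Fin N.n)) = _
        rw [N.succ_cast]
        exact N.hz1 _
      · intro t t' h1 h2
        apply N.hdisj1
        · intro h; have := (N.shift_inj s (by omega) (by omega)).mp h; omega
        · rw [← N.succ_cast]; intro h
          have := (N.shift_inj s (by omega) (by omega)).mp h; omega
        · rw [← N.succ_cast]; intro h
          have := (N.shift_inj s (by omega) (by omega)).mp h; omega
      · intro t _; exact N.piece_subset _
    · have ht0eq : t0 = N.n - 1 := by omega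
      have hbnode : b ∈ N.piece (s + ((N.n - 1 : ℕ) : Fin N.n)) := by
        rw [← ht0eq]; exact ht0.2
      have hanot : a ∉ N.piece (s + ((N.n - 1 : ℕ) : Fin N.n)) :=
        fun h => hcom _ h hbnode
      refine ⟨1, fun t => if t = 0 then N.piece s
          else N.piece (s + ((N.n - 1 : ℕ) : Fin N.n)), ⟨?_, ?_, ?_, ?_, ?_, ?_, ?_⟩, ?_⟩
      · intro t _
        by_cases h : t = 0
        · refine ⟨[s], by simp, ?_⟩
          show (if t = 0 then N.piece s else _) = _
          rw [if_pos h]; exact (N.copy_single _).symm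
        · refine ⟨[s + ((N.n - 1 : ℕ) : Fin N.n)], by simp, ?_⟩
          show (if t = 0 then _ else N.piece (s + ((N.n - 1 : ℕ) : Fin N.n))) = _
          rw [if_neg h]; exact (N.copy_single _).symm
      · show a ∈ if (0 : ℕ) = 0 then N.piece s else _
        rw [if_pos rfl]
        exact has
      · intro t h1 h2
        have ht : t = 1 := by omega
        subst ht
        show a ∉ if (1 : ℕ) = 0 then _ else N.piece (s + ((N.n - 1 : ℕ) : Fin N.n))
        rw [if_neg one_ne_zero]
        exact hanot
      · show b ∈ if (1 : ℕ) = 0 then _ else N.piece (s + ((N.n - 1 : ℕ) : Fin N.n))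
        rw [if_neg one_ne_zero]
        exact hbnode
      · intro t htlt
        have ht : t = 0 := by omega
        subst ht
        show b ∉ if (0 : ℕ) = 0 then N.piece s else _
        rw [if_pos rfl]
        exact hbs
      · intro t htle
        have ht : t = 0 := by omega
        subst ht
        refine ⟨N.z (s + ((N.n - 1 : ℕ) : Fin N.n)), ?_⟩
        show (if (0 : ℕ) = 0 then N.piece s else _) ∩
            (if (1 : ℕ) = 0 then N.piece s else N.piece (s + ((N.n - 1 : ℕ) : Fin N.n))) = _
        rw [if_pos rfl, if_neg one_ne_zero, Set.inter_comm]
        have h := N.hz1 (s + ((N.n - 1 : ℕ) : Fin N.n))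
        rwa [N.wrap_cast] at h
      · intro t t' h1 h2; omega
      · intro t _
        show (if t = 0 then N.piece s else N.piece (s + ((N.n - 1 : ℕ) : Fin N.n))) ⊆ N.F
        by_cases h : t = 0
        · rw [if_pos h]; exact N.piece_subset _
        · rw [if_neg h]; exact N.piece_subset _

/-- Push a 1-level chain forward through `word σ`: a `(k+1)`-level chain inside `F_σ`. -/
lemma inner (N : Necklace d) (k : ℕ) (σ : List (Fin N.n)) (hσ : σ.length = k)
    {a b : Euc d} (ha : a ∈ N.copy σ) (hb : b ∈ N.copy σ) :
    ∃ L C, IsChainN N (k+1) a b L C ∧ ∀ t ≤ L, C t ⊆ N.copy σ := by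
  obtain ⟨a', ha', haeq⟩ := ha
  obtain ⟨b', hb', hbeq⟩ := hb
  obtain ⟨L, B, hch, hsub⟩ := N.base ha' hb'
  obtain ⟨hrep, hx0, hxo, huL, huo, hcons, hfar⟩ := hch
  have hinj : Function.Injective (N.word σ) := (N.word σ).injective
  refine ⟨L, fun t => N.word σ '' B t, ⟨?_, ?_, ?_, ?_, ?_, ?_, ?_⟩, ?_⟩
  · intro t ht
    obtain ⟨τ, hτ1, hτ2⟩ := hrep t ht
    obtain ⟨i, rfl⟩ := List.length_eq_one_iff.mp hτ1
    refine ⟨σ ++ [i], by simp [hσ], ?_⟩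
    show N.word σ '' B t = _
    rw [hτ2, N.copy_single, N.copy_append]
    rfl
  · exact ⟨a', hx0, haeq⟩
  · intro t h1 h2 hmem
    obtain ⟨y, hy, hye⟩ := hmem
    have : y = a' := hinj (by rw [hye, ← haeq])
    subst this
    exact hxo t h1 h2 hy
  · exact ⟨b', huL, hbeq⟩
  · intro t ht hmem
    obtain ⟨y, hy, hye⟩ := hmem
    have : y = b' := hinj (by rw [hye, ← hbeq])
    subst this
    exact huo t ht hy
  · intro t ht
    obtain ⟨v, hv⟩ := hcons t ht
    refine ⟨N.word σ v, ?_⟩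
    show N.word σ '' B t ∩ N.word σ '' B (t+1) = _
    rw [← Set.image_inter hinj, hv, Set.image_singleton]
  · intro t t' h1 h2
    show N.word σ '' B t ∩ N.word σ '' B t' = ∅
    rw [← Set.image_inter hinj, hfar t t' h1 h2, Set.image_empty]
  · intro t ht
    exact Set.image_mono (hsub t ht)

/-- Concatenation of two chains meeting only at `w`. -/
lemma append (N : Necklace d) (k : ℕ) {x w u : Euc d} {L1 L2 : ℕ}
    {B C : ℕ → Set (Euc d)}
    (h1 : IsChainN N k x w L1 B) (h2 : IsChainN N k w u L2 C)
    (hBC : ∀ p ≤ L1, ∀ q ≤ L2, B p ∩ C q ⊆ {w})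
    (hxC : ∀ q ≤ L2, x ∉ C q) (huB : ∀ p ≤ L1, u ∉ B p) :
    IsChainN N k x u (L1 + 1 + L2)
      (fun t => if t ≤ L1 then B t else C (t - (L1 + 1))) := by
  obtain ⟨rep1, hx1, hxo1, hw1, hwo1, cons1, far1⟩ := h1
  obtain ⟨rep2, hw2, hwo2, hu2, huo2, cons2, far2⟩ := h2
  refine ⟨?_, ?_, ?_, ?_, ?_, ?_, ?_⟩
  · intro t ht
    by_cases h : t ≤ L1
    · obtain ⟨σ, hσ, he⟩ := rep1 t h
      refine ⟨σ, hσ, ?_⟩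
      show (if t ≤ L1 then B t else _) = _
      rw [if_pos h]; exact he
    · obtain ⟨σ, hσ, he⟩ := rep2 (t - (L1+1)) (by omega)
      refine ⟨σ, hσ, ?_⟩
      show (if t ≤ L1 then _ else C (t - (L1+1))) = _
      rw [if_neg h]; exact he
  · show x ∈ if 0 ≤ L1 then B 0 else _
    rw [if_pos (Nat.zero_le _)]; exact hx1
  · intro t ht1 ht2
    by_cases h : t ≤ L1
    · show x ∉ if t ≤ L1 then B t else _
      rw [if_pos h]; exact hxo1 t ht1 h
    · show x ∉ if t ≤ L1 then _ else C (t - (L1+1))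
      rw [if_neg h]; exact hxC _ (by omega)
  · show u ∈ if L1 + 1 + L2 ≤ L1 then _ else C (L1 + 1 + L2 - (L1+1))
    rw [if_neg (by omega)]
    have hL : L1 + 1 + L2 - (L1+1) = L2 := by omega
    rw [hL]; exact hu2
  · intro t ht
    by_cases h : t ≤ L1
    · show u ∉ if t ≤ L1 then B t else _
      rw [if_pos h]; exact huB t h
    · show u ∉ if t ≤ L1 then _ else C (t - (L1+1))
      rw [if_neg h]; exact huo2 _ (by omega)
  · intro t ht
    by_cases hA : t + 1 ≤ L1
    · obtain ⟨v, hv⟩ := cons1 t hA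
      refine ⟨v, ?_⟩
      show (if t ≤ L1 then B t else _) ∩ (if t + 1 ≤ L1 then B (t+1) else _) = _
      rw [if_pos (by omega), if_pos hA]; exact hv
    · by_cases hB : t ≤ L1
      · have htL : t = L1 := by omega
        refine ⟨w, ?_⟩
        show (if t ≤ L1 then B t else _) ∩
            (if t + 1 ≤ L1 then _ else C (t + 1 - (L1+1))) = _
        rw [if_pos hB, if_neg hA]
        have h0 : t + 1 - (L1+1) = 0 := by omega
        rw [h0]
        apply Set.Subset.antisymm (hBC t hB 0 (Nat.zero_le _))
        intro y hy
        rw [Set.mem_singleton_iff] at hy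
        subst hy
        exact Set.mem_inter (htL ▸ hw1) hw2
      · obtain ⟨v, hv⟩ := cons2 (t - (L1+1)) (by omega)
        refine ⟨v, ?_⟩
        show (if t ≤ L1 then _ else C (t - (L1+1))) ∩
            (if t + 1 ≤ L1 then _ else C (t + 1 - (L1+1))) = _
        rw [if_neg hB, if_neg hA]
        have hsucc : t + 1 - (L1+1) = (t - (L1+1)) + 1 := by omega
        rw [hsucc]; exact hv
  · intro t t' hlt hle
    by_cases hA : t' ≤ L1
    · show (if t ≤ L1 then B t else _) ∩ (if t' ≤ L1 then B t' else _) = ∅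
      rw [if_pos (by omega), if_pos hA]
      exact far1 t t' hlt hA
    · by_cases hB : t ≤ L1
      · show (if t ≤ L1 then B t else _) ∩ (if t' ≤ L1 then _ else C (t' - (L1+1))) = ∅
        rw [if_pos hB, if_neg hA]
        have hsub := hBC t hB (t' - (L1+1)) (by omega)
        rcases Set.subset_singleton_iff_eq.mp hsub with he | he
        · exact he
        · exfalso
          have hwin : w ∈ B t ∩ C (t' - (L1+1)) := by rw [he]; exact rfl
          by_cases hc : t = L1
          · exact hwo2 (t' - (L1+1)) (by omega) (by omega) hwin.2
          · exact hwo1 t (by omega) hwin.1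
      · show (if t ≤ L1 then _ else C (t - (L1+1))) ∩
            (if t' ≤ L1 then _ else C (t' - (L1+1))) = ∅
        rw [if_neg hB, if_neg hA]
        exact far2 _ _ (by omega) (by omega)

/-- Main induction: `k`-level chains exist for every `k`. -/
lemma chainNat (N : Necklace d) (k : ℕ) {x u : Euc d} (hx : x ∈ N.F) (hu : u ∈ N.F) :
    ∃ L B, IsChainN N k x u L B := by
  induction k with
  | zero =>
      refine ⟨0, fun _ => N.F, ⟨fun t _ => ⟨[], rfl, N.copy_nil.symm⟩, hx, ?_, hu, ?_, ?_, ?_⟩⟩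
      · intro t h1 h2; omega
      · intro t ht; omega
      · intro t ht; omega
      · intro t t' h1 h2; omega
  | succ k ih =>
      obtain ⟨L, B, hch⟩ := ih
      obtain ⟨hrep, hx0, hxo, huL, huo, hcons, hfar⟩ := hch
      have hwex : ∀ t : ℕ, ∃ v, t + 1 ≤ L → B t ∩ B (t+1) = {v} := by
        intro t
        by_cases h : t + 1 ≤ L
        · obtain ⟨v, hv⟩ := hcons t h; exact ⟨v, fun _ => hv⟩
        · exact ⟨x, fun h' => absurd h' h⟩
      choose w hw using hwex
      set e : ℕ → Euc d := fun j => if j < L then w j else u with he_def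
      have hwmem : ∀ j, j + 1 ≤ L → w j ∈ B j ∩ B (j+1) := by
        intro j hj
        rw [hw j hj]; exact rfl
      have heB : ∀ j ≤ L, e j ∈ B j := by
        intro j hj
        by_cases h : j < L
        · simp only [he_def, if_pos h]; exact (hwmem j h).1
        · have hjL : j = L := by omega
          simp only [he_def, if_neg h]; rw [hjL]; exact huL
      have key : ∀ j, j ≤ L → ∃ L' C, IsChainN N (k+1) x (e j) L' C ∧
          ∀ t ≤ L', ∃ i, i ≤ j ∧ C t ⊆ B i := by
        intro j
        induction j with
        | zero =>
            intro _
            obtain ⟨σ, hσ, hBσ⟩ := hrep 0 (Nat.zero_le _)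
            obtain ⟨L', C, hC, hCsub⟩ := N.inner k σ hσ (hBσ ▸ hx0) (hBσ ▸ heB 0 (Nat.zero_le _))
            exact ⟨L', C, hC, fun t ht => ⟨0, le_rfl, by rw [hBσ]; exact hCsub t ht⟩⟩
        | succ j ihj =>
            intro hj1
            obtain ⟨L1, C1, hC1, hC1sub⟩ := ihj (by omega)
            obtain ⟨σ, hσ, hBσ⟩ := hrep (j+1) hj1
            have hej : e j = w j := by simp only [he_def, if_pos (by omega : j < L)]
            have hejB : e j ∈ B (j+1) := by rw [hej]; exact (hwmem j hj1).2
            obtain ⟨L2, C2, hC2, hC2sub⟩ := N.inner k σ hσ (hBσ ▸ hejB) (hBσ ▸ heB (j+1) hj1)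
            have hBC : ∀ p ≤ L1, ∀ q ≤ L2, C1 p ∩ C2 q ⊆ {e j} := by
              intro p hp q hq y hy
              obtain ⟨i, hi, hsubi⟩ := hC1sub p hp
              have hy1 : y ∈ B i := hsubi hy.1
              have hy2 : y ∈ B (j+1) := by rw [hBσ]; exact hC2sub q hq hy.2
              rcases Nat.lt_or_ge i j with h | h
              · exfalso
                have hfe := hfar i (j+1) (by omega) hj1
                exact (hfe ▸ Set.mem_inter hy1 hy2 : y ∈ (∅ : Set (Euc d)))
              · have hij : i = j := by omega
                subst hij
                rw [hej, ← hw i hj1]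
                exact Set.mem_inter hy1 hy2
            have hxC2 : ∀ q ≤ L2, x ∉ C2 q := by
              intro q hq hmem
              have : x ∈ B (j+1) := by rw [hBσ]; exact hC2sub q hq hmem
              exact hxo (j+1) (by omega) hj1 this
            have huC1 : ∀ p ≤ L1, e (j+1) ∉ C1 p := by
              intro p hp hmem
              obtain ⟨i, hi, hsubi⟩ := hC1sub p hp
              have hyB : e (j+1) ∈ B i := hsubi hmem
              by_cases h : j + 1 < L
              · have hmem2 : e (j+1) ∈ B (j+2) := by
                  simp only [he_def, if_pos h]; exact (hwmem (j+1) h).2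
                have hfe := hfar i (j+2) (by omega) (by omega)
                exact (hfe ▸ Set.mem_inter hyB hmem2 : e (j+1) ∈ (∅ : Set (Euc d)))
              · have heu : e (j+1) = u := by simp only [he_def, if_neg h]
                rw [heu] at hyB
                exact huo i (by omega) hyB
            have happ := N.append (k+1) hC1 hC2 hBC hxC2 huC1
            refine ⟨L1 + 1 + L2, _, happ, ?_⟩
            intro t ht
            by_cases h : t ≤ L1
            · obtain ⟨i, hi, hsubi⟩ := hC1sub t h
              refine ⟨i, by omega, ?_⟩
              show (if t ≤ L1 then C1 t else _) ⊆ B i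
              rw [if_pos h]; exact hsubi
            · refine ⟨j+1, le_rfl, ?_⟩
              show (if t ≤ L1 then _ else C2 (t - (L1+1))) ⊆ B (j+1)
              rw [if_neg h, hBσ]
              exact hC2sub _ (by omega)
      obtain ⟨L', C, hC, _⟩ := key L le_rfl
      have heL : e L = u := by simp only [he_def, if_neg (by omega : ¬ L < L)]
      rw [heL] at hC
      exact ⟨L', C, hC⟩

end Necklace



/-- For any necklace `F`, any `x, u ∈ F` and any `k ≥ 1`, there exists a `k`-level chain
of `F` from `x` to `u`: a finite sequence `(A_0, …, A_N)` of `k`-level copies of `F` with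
`x ∈ A_0 \ ⋃_{j≥1} A_j`, `u ∈ A_N \ ⋃_{j≤N-1} A_j`, such that consecutive copies meet in
a single point and non-consecutive copies are disjoint. -/
theorem Necklace.exists_chain {d : ℕ} (N : Necklace d)
    (x : Euc d) (hx : x ∈ N.F) (u : Euc d) (hu : u ∈ N.F) (k : ℕ) (hk : 1 ≤ k) :
    ∃ (M : ℕ) (A : Fin (M + 1) → Set (Euc d)),
      (∀ j, ∃ σ : List (Fin N.n), σ.length = k ∧ A j = N.copy σ) ∧
      x ∈ A 0 ∧ (∀ j, j ≠ 0 → x ∉ A j) ∧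
      u ∈ A (Fin.last M) ∧ (∀ j, j ≠ Fin.last M → u ∉ A j) ∧
      (∀ j m : Fin (M + 1), (j : ℕ) + 1 = (m : ℕ) → ∃ w, A j ∩ A m = {w}) ∧
      (∀ j m : Fin (M + 1), (j : ℕ) + 2 ≤ (m : ℕ) → A j ∩ A m = ∅) := by
  obtain ⟨L, B, hrep, hx0, hxo, huL, huo, hcons, hfar⟩ := N.chainNat k hx hu
  refine ⟨L, fun j => B (j : ℕ), ?_, ?_, ?_, ?_, ?_, ?_, ?_⟩
  · intro j; exact hrep (j : ℕ) j.is_le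
  · show x ∈ B ((0 : Fin (L+1)) : ℕ)
    rw [Fin.val_zero]; exact hx0
  · intro j hj
    have hne : (j : ℕ) ≠ 0 := fun h => hj (Fin.ext (by simp [h]))
    exact hxo (j : ℕ) (by omega) j.is_le
  · show u ∈ B ((Fin.last L : Fin (L+1)) : ℕ)
    rw [Fin.val_last]; exact huL
  · intro j hj
    have hne : (j : ℕ) ≠ L := fun h => hj (Fin.ext (by simp [h, Fin.val_last]))
    exact huo (j : ℕ) (by have := j.is_le; omega)
  · intro j m hjm
    obtain ⟨v, hv⟩ := hcons (j : ℕ) (by have := m.is_le; omega)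
    refine ⟨v, ?_⟩
    show B (j : ℕ) ∩ B (m : ℕ) = {v}
    rw [show (m : ℕ) = (j : ℕ) + 1 from hjm.symm]
    exact hv
  · intro j m hjm
    exact hfar (j : ℕ) (m : ℕ) hjm m.is_le
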